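/- arXiv:0905.0735 — 3 statements merged into one kernel-verified Lean document; each statement's English description precedes it below -/
import Mathlib

section
/- Let Λ be a k-graph and let μ, ν ∈ Λ with s(μ) = s(ν), r(μ) = r(ν), and m ∈ ℕ^k with m ≤ d(μ) ∧ d(ν) and μ(0,m) = ν(0,m). Then for any τ ∈ s(μ)Λ, MCE(μτ, ντ) = { μ(0,m)·ρ : ρ ∈ MCE(μ(m,d(μ))τ, ν(m,d(ν))τ) }; in particular MCE(μτ, ντ) is empty if and only if MCE(μ(m,d(μ))τ, ν(m,d(ν))τ) is empty. -/
/-- A `k`-graph: a countable category `Λ` with a degree functor `d : Λ → ℕ^k`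
satisfying the factorisation property. Morphisms form the type `Mor`,
objects (vertices) the type `Obj`. -/
structure KGraph (k : ℕ) where
  Obj : Type
  Mor : Type
  countableObj : Countable Obj
  countableMor : Countable Mor
  r : Mor → Obj
  s : Mor → Obj
  d : Mor → (Fin k → ℕ)
  id : Obj → Mor
  comp : ∀ μ ν : Mor, s μ = r ν → Mor
  r_id : ∀ v, r (id v) = v
  s_id : ∀ v, s (id v) = v
  d_id : ∀ v, d (id v) = 0
  r_comp : ∀ μ ν h, r (comp μ ν h) = r μ
  s_comp : ∀ μ ν h, s (comp μ ν h) = s ν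
  d_comp : ∀ μ ν h, d (comp μ ν h) = d μ + d ν
  id_comp : ∀ μ : Mor, comp (id (r μ)) μ (s_id (r μ)) = μ
  comp_id : ∀ μ : Mor, comp μ (id (s μ)) ((r_id (s μ)).symm) = μ
  assoc : ∀ (μ ν ρ : Mor) (h₁ : s μ = r ν) (h₂ : s ν = r ρ),
    comp (comp μ ν h₁) ρ ((s_comp μ ν h₁).trans h₂)
      = comp μ (comp ν ρ h₂) (h₁.trans (r_comp ν ρ h₂).symm)
  factor : ∀ (lam : Mor) (m n : Fin k → ℕ), d lam = m + n →
    ∃! p : {q : Mor × Mor // s q.1 = r q.2},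
      d p.val.1 = m ∧ d p.val.2 = n ∧ lam = comp p.val.1 p.val.2 p.property

namespace KGraph

variable {k : ℕ} (Λ : KGraph k)

/-- `μ` is an initial segment of `lam`, i.e. `lam = μρ` for some `ρ`. -/
def InitSeg (μ lam : Λ.Mor) : Prop :=
  ∃ (ρ : Λ.Mor) (h : Λ.s μ = Λ.r ρ), lam = Λ.comp μ ρ h

/-- The set of minimal common extensions of `μ` and `ν`. -/
def MCE (μ ν : Λ.Mor) : Set Λ.Mor :=
  {lam | Λ.d lam = Λ.d μ ⊔ Λ.d ν ∧ Λ.InitSeg μ lam ∧ Λ.InitSeg ν lam}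

/-- `Λ` is finitely aligned if all `MCE` sets are finite. -/
def FinitelyAligned : Prop := ∀ μ ν : Λ.Mor, (Λ.MCE μ ν).Finite

/-- Aperiodicity: distinct paths with the same source admit a common
extension `τ` with `MCE (ατ, βτ) = ∅`. -/
def Aperiodic : Prop :=
  ∀ α β : Λ.Mor, α ≠ β → Λ.s α = Λ.s β →
    ∃ (τ : Λ.Mor) (hα : Λ.s α = Λ.r τ) (hβ : Λ.s β = Λ.r τ),
      Λ.MCE (Λ.comp α τ hα) (Λ.comp β τ hβ) = ∅

/-- `E` is a finite exhaustive subset of `vΛ`. -/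
def IsFE (v : Λ.Obj) (E : Set Λ.Mor) : Prop :=
  E.Finite ∧ (∀ α ∈ E, Λ.r α = v) ∧
    ∀ μ : Λ.Mor, Λ.r μ = v → ∃ lam ∈ E, (Λ.MCE μ lam).Nonempty

/-- The segment `lam(p,q)` of a path `lam`, for `p ≤ q ≤ d lam`,
obtained from the factorisation property. -/
noncomputable def seg (lam : Λ.Mor) (p q : Fin k → ℕ) (hpq : p ≤ q) (hq : q ≤ Λ.d lam) :
    Λ.Mor := by
  have h1 : Λ.d lam = p + (Λ.d lam - p) := by
    funext i; exact (Nat.add_sub_cancel' ((hpq.trans hq) i)).symm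
  have hspec := (Λ.factor lam p (Λ.d lam - p) h1).exists.choose_spec
  refine (Λ.factor ((Λ.factor lam p (Λ.d lam - p) h1).exists.choose).val.2
      (q - p) (Λ.d lam - q) ?_).exists.choose.val.1
  rw [hspec.2.1]
  funext i
  have h3 : p i ≤ q i := hpq i
  have h4 : q i ≤ Λ.d lam i := hq i
  simp only [Pi.sub_apply, Pi.add_apply]
  omega

/-- A (possibly infinite) path in `Λ`: a degree-preserving functor from
`Ω_{k,m}` (for `m = deg ∈ (ℕ ∪ {∞})^k`) to `Λ`, recorded by its segments. -/
structure InfPath (Λ : KGraph k) where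
  deg : Fin k → ℕ∞
  seg : ∀ p q : Fin k → ℕ, p ≤ q → (∀ i, (q i : ℕ∞) ≤ deg i) → Λ.Mor
  d_seg : ∀ p q hpq hq, Λ.d (seg p q hpq hq) = q - p
  comp_seg : ∀ (p q r : Fin k → ℕ) (hpq : p ≤ q) (hqr : q ≤ r)
      (hq : ∀ i, (q i : ℕ∞) ≤ deg i) (hr : ∀ i, (r i : ℕ∞) ≤ deg i),
    ∃ h : Λ.s (seg p q hpq hq) = Λ.r (seg q r hqr hr),
      Λ.comp (seg p q hpq hq) (seg q r hqr hr) h = seg p r (hpq.trans hqr) hr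

/-- The vertex `x(n)` of an infinite path. -/
def InfPath.vert {Λ : KGraph k} (x : Λ.InfPath) (n : Fin k → ℕ) (hn : ∀ i, (n i : ℕ∞) ≤ x.deg i) : Λ.Obj :=
  Λ.r (x.seg n n le_rfl hn)

/-- The range `r(x) = x(0)` of an infinite path. -/
def InfPath.rng {Λ : KGraph k} (x : Λ.InfPath) : Λ.Obj :=
  Λ.r (x.seg 0 0 le_rfl (fun i => by simp))

/-- `x` is a boundary path: it hits every finite exhaustive set. -/
def IsBoundary (x : Λ.InfPath) : Prop :=
  ∀ (n : Fin k → ℕ) (hn : ∀ i, (n i : ℕ∞) ≤ x.deg i) (E : Set Λ.Mor),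
    Λ.IsFE (x.vert n hn) E →
    ∃ (p : Fin k → ℕ) (hp : ∀ i, ((n + p) i : ℕ∞) ≤ x.deg i),
      x.seg n (n + p) le_self_add hp ∈ E

/-- The set of boundary paths with range `v` is `v∂Λ`. -/

private lemma enat_aux {a b : ℕ} {D : ℕ∞} (h2 : (a : ℕ∞) ≤ D) (h1 : (b : ℕ∞) ≤ D - a) :
    ((a + b : ℕ) : ℕ∞) ≤ D := by
  cases D with
  | top => exact le_top
  | coe dN =>
    have ha : a ≤ dN := by exact_mod_cast h2
    rw [← ENat.coe_sub] at h1
    have hb : b ≤ dN - a := by exact_mod_cast h1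
    exact_mod_cast (by omega : a + b ≤ dN)

/-- The shifted path `σ^m(x)`. -/
def InfPath.shift {Λ : KGraph k} (x : Λ.InfPath) (m : Fin k → ℕ) (hm : ∀ i, (m i : ℕ∞) ≤ x.deg i) :
    Λ.InfPath where
  deg := fun i => x.deg i - (m i : ℕ∞)
  seg := fun p q hpq hq => x.seg (m + p) (m + q) (add_le_add_right hpq m)
    (fun i => by
      have := enat_aux (hm i) (hq i)
      simpa using this)
  d_seg := fun p q hpq hq => by
    rw [x.d_seg]
    funext i
    simp only [Pi.sub_apply, Pi.add_apply]
    omega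
  comp_seg := fun p q r hpq hqr hq hr =>
    x.comp_seg (m + p) (m + q) (m + r) (add_le_add_right hpq m) (add_le_add_right hqr m) _ _

/-- `w = lam · z` : the path `w` extends `z` by the finite path `lam`,
i.e. `w(0, d lam) = lam` and `σ^{d lam}(w) = z`. -/
def InfPath.ExtendsBy {Λ : KGraph k} (w z : Λ.InfPath) (lam : Λ.Mor) : Prop :=
  ∃ h : ∀ i, ((Λ.d lam) i : ℕ∞) ≤ w.deg i,
    w.seg 0 (Λ.d lam) zero_le h = lam ∧ w.shift (Λ.d lam) h = z

/-- Local periodicity `m, n` at `v`. -/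
def LocalPeriodicity (m n : Fin k → ℕ) (v : Λ.Obj) : Prop :=
  ∀ x : Λ.InfPath, Λ.IsBoundary x → x.rng = v →
    (∀ i, (((m ⊔ n) i : ℕ) : ℕ∞) ≤ x.deg i) ∧
    ∃ (hm : ∀ i, (m i : ℕ∞) ≤ x.deg i) (hn : ∀ i, (n i : ℕ∞) ≤ x.deg i),
      x.shift m hm = x.shift n hn

/-- Cofinality of `Λ`, stated in terms of finite paths. -/
def Cofinal : Prop :=
  ∀ v w : Λ.Obj, ∃ E : Set Λ.Mor, Λ.IsFE w E ∧
    ∀ α ∈ E, ∃ lam : Λ.Mor, Λ.r lam = v ∧ Λ.s lam = Λ.s α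


lemma comp_congr {a b a' b' : Λ.Mor} (h : Λ.s a = Λ.r b) (h' : Λ.s a' = Λ.r b')
    (e1 : a = a') (e2 : b = b') : Λ.comp a b h = Λ.comp a' b' h' := by
  subst e1; subst e2; rfl

lemma fac_unique {α β α' β' : Λ.Mor} (h : Λ.s α = Λ.r β) (h' : Λ.s α' = Λ.r β')
    (hc : Λ.comp α β h = Λ.comp α' β' h') (hd : Λ.d α = Λ.d α') :
    α = α' ∧ β = β' := by
  have hdl : Λ.d (Λ.comp α β h) = Λ.d α + Λ.d β := Λ.d_comp _ _ _
  have hfac := Λ.factor (Λ.comp α β h) (Λ.d α) (Λ.d β) hdl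
  have hdβ : Λ.d β' = Λ.d β := by
    have := (Λ.d_comp α β h).symm.trans (hc.symm ▸ Λ.d_comp α' β' h')
    funext i
    have h1 := congrFun this i
    have h2 := congrFun hd i
    simp only [Pi.add_apply] at h1
    omega
  have := hfac.unique (y₁ := ⟨(α, β), h⟩) (y₂ := ⟨(α', β'), h'⟩)
    ⟨rfl, rfl, rfl⟩ ⟨hd.symm, hdβ, hc⟩
  exact ⟨congrArg (fun p => p.val.1) this, congrArg (fun p => p.val.2) this⟩

lemma seg_spec (lam : Λ.Mor) (p q : Fin k → ℕ) (hpq : p ≤ q) (hq : q ≤ Λ.d lam) :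
    ∃ (α γ : Λ.Mor) (h2 : Λ.s (Λ.seg lam p q hpq hq) = Λ.r γ)
      (h3 : Λ.s α = Λ.r (Λ.comp (Λ.seg lam p q hpq hq) γ h2)),
      Λ.d α = p ∧ Λ.d (Λ.seg lam p q hpq hq) = q - p ∧
      lam = Λ.comp α (Λ.comp (Λ.seg lam p q hpq hq) γ h2) h3 := by
  have h1 : Λ.d lam = p + (Λ.d lam - p) := by
    funext i; exact (Nat.add_sub_cancel' ((hpq.trans hq) i)).symm
  have hspecA := (Λ.factor lam p (Λ.d lam - p) h1).exists.choose_spec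
  set A := (Λ.factor lam p (Λ.d lam - p) h1).exists.choose with hA
  have hdA2 : Λ.d A.val.2 = (q - p) + (Λ.d lam - q) := by
    rw [hspecA.2.1]
    funext i
    have h3 : p i ≤ q i := hpq i
    have h4 : q i ≤ Λ.d lam i := hq i
    simp only [Pi.sub_apply, Pi.add_apply]
    omega
  have hspecB := (Λ.factor A.val.2 (q - p) (Λ.d lam - q) hdA2).exists.choose_spec
  set B := (Λ.factor A.val.2 (q - p) (Λ.d lam - q) hdA2).exists.choose with hB
  have hseg : Λ.seg lam p q hpq hq = B.val.1 := rfl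
  have e2 : A.val.2 = Λ.comp (Λ.seg lam p q hpq hq) B.val.2 (hseg ▸ B.property) :=
    hspecB.2.2.trans (comp_congr Λ B.property (hseg ▸ B.property) hseg.symm rfl)
  refine ⟨A.val.1, B.val.2, hseg ▸ B.property, ?_, hspecA.1, hseg ▸ hspecB.1, ?_⟩
  · exact A.property.trans (congrArg Λ.r e2)
  · exact hspecA.2.2.trans (comp_congr Λ A.property _ rfl e2)

lemma seg_eq {lam : Λ.Mor} {p q : Fin k → ℕ} (hpq : p ≤ q) (hq : q ≤ Λ.d lam)
    {α β γ : Λ.Mor} (hα : Λ.d α = p) (hβ : Λ.d β = q - p)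
    (h2 : Λ.s β = Λ.r γ) (h3 : Λ.s α = Λ.r (Λ.comp β γ h2))
    (hlam : lam = Λ.comp α (Λ.comp β γ h2) h3) :
    Λ.seg lam p q hpq hq = β := by
  obtain ⟨α', γ', h2', h3', hdα', hdseg, hlam'⟩ := Λ.seg_spec lam p q hpq hq
  have h := Λ.fac_unique h3' h3 (hlam'.symm.trans hlam) (hdα'.trans hα.symm)
  exact (Λ.fac_unique h2' h2 h.2 (hdseg.trans hβ.symm)).1

lemma seg_decomp (lam : Λ.Mor) (n : Fin k → ℕ) (hn : n ≤ Λ.d lam) :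
    ∃ h : Λ.s (Λ.seg lam 0 n zero_le hn) = Λ.r (Λ.seg lam n (Λ.d lam) hn le_rfl),
      lam = Λ.comp (Λ.seg lam 0 n zero_le hn) (Λ.seg lam n (Λ.d lam) hn le_rfl) h ∧
      Λ.d (Λ.seg lam 0 n zero_le hn) = n ∧
      Λ.d (Λ.seg lam n (Λ.d lam) hn le_rfl) = Λ.d lam - n := by
  have hd : Λ.d lam = n + (Λ.d lam - n) := by
    funext i; exact (Nat.add_sub_cancel' (hn i)).symm
  obtain ⟨⟨⟨a, b⟩, hab⟩, ⟨hda, hdb, heq⟩, -⟩ := Λ.factor lam n (Λ.d lam - n) hd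
  simp only at hda hdb heq
  have hidr : Λ.s (Λ.id (Λ.r lam)) = Λ.r (Λ.comp a b hab) := by
    rw [Λ.s_id, Λ.r_comp, heq, Λ.r_comp]
  have hlam1 : lam = Λ.comp (Λ.id (Λ.r lam)) (Λ.comp a b hab) hidr := by
    conv_lhs => rw [← Λ.id_comp lam]
    exact comp_congr Λ _ _ rfl heq
  have hseg1 : Λ.seg lam 0 n zero_le hn = a :=
    Λ.seg_eq _ _ (Λ.d_id _) (by rw [hda]; funext i; simp) hab hidr hlam1
  have hb2 : Λ.s b = Λ.r (Λ.id (Λ.s b)) := (Λ.r_id _).symm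
  have hcb : Λ.comp b (Λ.id (Λ.s b)) hb2 = b := Λ.comp_id b
  have h3 : Λ.s a = Λ.r (Λ.comp b (Λ.id (Λ.s b)) hb2) := by rw [hcb]; exact hab
  have hlam2 : lam = Λ.comp a (Λ.comp b (Λ.id (Λ.s b)) hb2) h3 := by
    rw [heq]; exact comp_congr Λ _ _ rfl hcb.symm
  have hseg2 : Λ.seg lam n (Λ.d lam) hn le_rfl = b :=
    Λ.seg_eq _ _ hda hdb hb2 h3 hlam2
  refine ⟨by rw [hseg1, hseg2]; exact hab, ?_, by rw [hseg1, hda], by rw [hseg2, hdb]⟩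
  exact heq.trans (comp_congr Λ hab _ hseg1.symm hseg2.symm)


/-- If `μ, ν` have the same source and range, agree on the initial segment
of degree `m ≤ d(μ) ∧ d(ν)`, then for any `τ ∈ s(μ)Λ`,
`MCE(μτ, ντ) = { μ(0,m)·ρ : ρ ∈ MCE(μ(m,d μ)τ, ν(m,d ν)τ) }`; in
particular the one is empty iff the other is. -/
theorem MCE_common_initial_segment (μ ν τ : Λ.Mor)
    (hs : Λ.s μ = Λ.s ν) (hr : Λ.r μ = Λ.r ν) (m : Fin k → ℕ)
    (hm : m ≤ Λ.d μ ⊓ Λ.d ν)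
    (hseg : Λ.seg μ 0 m zero_le (hm.trans inf_le_left)
          = Λ.seg ν 0 m zero_le (hm.trans inf_le_right))
    (hμτ : Λ.s μ = Λ.r τ) (hντ : Λ.s ν = Λ.r τ)
    (h1 : Λ.s (Λ.seg μ m (Λ.d μ) (hm.trans inf_le_left) le_rfl) = Λ.r τ)
    (h2 : Λ.s (Λ.seg ν m (Λ.d ν) (hm.trans inf_le_right) le_rfl) = Λ.r τ) :
    Λ.MCE (Λ.comp μ τ hμτ) (Λ.comp ν τ hντ)
      = {lam | ∃ ρ ∈ Λ.MCE (Λ.comp (Λ.seg μ m (Λ.d μ) (hm.trans inf_le_left) le_rfl) τ h1)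
                           (Λ.comp (Λ.seg ν m (Λ.d ν) (hm.trans inf_le_right) le_rfl) τ h2),
          ∃ hcomp, lam = Λ.comp (Λ.seg μ 0 m zero_le (hm.trans inf_le_left)) ρ hcomp} ∧
    ((Λ.MCE (Λ.comp μ τ hμτ) (Λ.comp ν τ hντ) = ∅) ↔
     (Λ.MCE (Λ.comp (Λ.seg μ m (Λ.d μ) (hm.trans inf_le_left) le_rfl) τ h1)
            (Λ.comp (Λ.seg ν m (Λ.d ν) (hm.trans inf_le_right) le_rfl) τ h2) = ∅)) := by
  set μ₁ := Λ.seg μ 0 m zero_le (hm.trans inf_le_left) with hμ₁def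
  set μ₂ := Λ.seg μ m (Λ.d μ) (hm.trans inf_le_left) le_rfl with hμ₂def
  set ν₁ := Λ.seg ν 0 m zero_le (hm.trans inf_le_right) with hν₁def
  set ν₂ := Λ.seg ν m (Λ.d ν) (hm.trans inf_le_right) le_rfl with hν₂def
  obtain ⟨hμc, hμeq, hdμ1, hdμ2⟩ := Λ.seg_decomp μ m (hm.trans inf_le_left)
  obtain ⟨hνc, hνeq, hdν1, hdν2⟩ := Λ.seg_decomp ν m (hm.trans inf_le_right)
  have hdμ1' : Λ.d μ₁ = m := hdμ1
  have hdμ2' : Λ.d μ₂ = Λ.d μ - m := hdμ2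
  have hdν1' : Λ.d ν₁ = m := hdν1
  have hdν2' : Λ.d ν₂ = Λ.d ν - m := hdν2
  -- key composite equalities
  have hY : Λ.s μ₁ = Λ.r (Λ.comp μ₂ τ h1) := hμc.trans (Λ.r_comp μ₂ τ h1).symm
  have hYν : Λ.s ν₁ = Λ.r (Λ.comp ν₂ τ h2) := hνc.trans (Λ.r_comp ν₂ τ h2).symm
  have e1 : Λ.comp μ τ hμτ = Λ.comp μ₁ (Λ.comp μ₂ τ h1) hY :=
    (comp_congr Λ hμτ ((Λ.s_comp μ₁ μ₂ hμc).trans h1) hμeq rfl).trans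
      (Λ.assoc μ₁ μ₂ τ hμc h1)
  have e1ν : Λ.comp ν τ hντ = Λ.comp ν₁ (Λ.comp ν₂ τ h2) hYν :=
    (comp_congr Λ hντ ((Λ.s_comp ν₁ ν₂ hνc).trans h2) hνeq rfl).trans
      (Λ.assoc ν₁ ν₂ τ hνc h2)
  have key : Λ.MCE (Λ.comp μ τ hμτ) (Λ.comp ν τ hντ)
      = {lam | ∃ ρ ∈ Λ.MCE (Λ.comp μ₂ τ h1) (Λ.comp ν₂ τ h2),
          ∃ hcomp, lam = Λ.comp μ₁ ρ hcomp} := by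
    ext lam
    simp only [MCE, Set.mem_setOf_eq]
    constructor
    · rintro ⟨hdlam, ⟨ρ₀, hρ₀, hlam0⟩, ⟨ρ₁, hρ₁, hlam1⟩⟩
      have hρ₀' : Λ.s (Λ.comp μ₂ τ h1) = Λ.r ρ₀ :=
        (Λ.s_comp μ₂ τ h1).trans ((Λ.s_comp μ τ hμτ).symm.trans hρ₀)
      have hρ₁' : Λ.s (Λ.comp ν₂ τ h2) = Λ.r ρ₁ :=
        (Λ.s_comp ν₂ τ h2).trans ((Λ.s_comp ν τ hντ).symm.trans hρ₁)
      set ρ := Λ.comp (Λ.comp μ₂ τ h1) ρ₀ hρ₀' with hρdef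
      set ρ' := Λ.comp (Λ.comp ν₂ τ h2) ρ₁ hρ₁' with hρ'def
      have hX : Λ.s μ₁ = Λ.r ρ := hY.trans (Λ.r_comp _ _ _).symm
      have hX' : Λ.s ν₁ = Λ.r ρ' := hYν.trans (Λ.r_comp _ _ _).symm
      have e2 : lam = Λ.comp μ₁ ρ hX := by
        rw [hlam0]
        exact (comp_congr Λ hρ₀ ((Λ.s_comp μ₁ (Λ.comp μ₂ τ h1) hY).trans hρ₀') e1 rfl).trans
          (Λ.assoc μ₁ (Λ.comp μ₂ τ h1) ρ₀ hY hρ₀')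
      have e2' : lam = Λ.comp ν₁ ρ' hX' := by
        rw [hlam1]
        exact (comp_congr Λ hρ₁ ((Λ.s_comp ν₁ (Λ.comp ν₂ τ h2) hYν).trans hρ₁') e1ν rfl).trans
          (Λ.assoc ν₁ (Λ.comp ν₂ τ h2) ρ₁ hYν hρ₁')
      have hρρ' : ρ = ρ' :=
        (Λ.fac_unique hX hX' (e2.symm.trans e2') (hdμ1.trans hdν1.symm)).2
      refine ⟨ρ, ⟨?_, ⟨ρ₀, hρ₀', rfl⟩, ⟨ρ₁, hρ₁', hρρ'⟩⟩, hX, e2⟩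
      · -- degree of ρ
        funext i
        have h6 := congrFun hdlam i
        have h7 := congrFun (congrArg Λ.d e2) i
        have h8 := congrFun hdμ1' i
        have h9 := congrFun hdμ2' i
        have h10 := congrFun hdν2' i
        have h11 : m i ≤ Λ.d μ i ⊓ Λ.d ν i := hm i
        simp only [Λ.d_comp, Pi.add_apply, Pi.sup_apply, Pi.sub_apply, Pi.inf_apply,
          ] at h6 h7 h8 h9 h10 h11 ⊢
        omega
    · rintro ⟨ρ, ⟨hdρ, ⟨σ₀, hσ₀, hρ0⟩, ⟨σ₁, hσ₁, hρ1⟩⟩, hcomp, hlam⟩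
      refine ⟨?_, ⟨σ₀, (Λ.s_comp μ τ hμτ).trans ((Λ.s_comp μ₂ τ h1).symm.trans hσ₀), ?_⟩,
        ⟨σ₁, (Λ.s_comp ν τ hντ).trans ((Λ.s_comp ν₂ τ h2).symm.trans hσ₁), ?_⟩⟩
      · -- degree of lam
        funext i
        have h6 := congrFun hdρ i
        have h7 := congrFun (congrArg Λ.d hlam) i
        have h8 := congrFun hdμ1' i
        have h9 := congrFun hdμ2' i
        have h10 := congrFun hdν2' i
        have h11 : m i ≤ Λ.d μ i ⊓ Λ.d ν i := hm i
        simp only [Λ.d_comp, Pi.add_apply, Pi.sup_apply, Pi.sub_apply, Pi.inf_apply,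
          ] at h6 h7 h8 h9 h10 h11 ⊢
        omega
      · -- lam = comp (comp μ τ) σ₀
        rw [hlam]
        refine (comp_congr Λ hcomp (hY.trans (Λ.r_comp (Λ.comp μ₂ τ h1) σ₀ hσ₀).symm) rfl hρ0).trans ?_
        refine ((Λ.assoc μ₁ (Λ.comp μ₂ τ h1) σ₀ hY hσ₀).symm).trans ?_
        exact comp_congr Λ _ _ e1.symm rfl
      · -- lam = comp (comp ν τ) σ₁
        rw [hlam]
        have hρ1' : ρ = Λ.comp (Λ.comp ν₂ τ h2) σ₁ hσ₁ := hρ1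
        refine (comp_congr Λ hcomp (hYν.trans (Λ.r_comp (Λ.comp ν₂ τ h2) σ₁ hσ₁).symm)
          hseg hρ1').trans ?_
        refine ((Λ.assoc ν₁ (Λ.comp ν₂ τ h2) σ₁ hYν hσ₁).symm).trans ?_
        exact comp_congr Λ _ _ e1ν.symm rfl
  refine ⟨key, ?_⟩
  rw [key]
  constructor
  · intro h
    rw [Set.eq_empty_iff_forall_notMem] at h ⊢
    intro ρ hρ
    obtain ⟨σ₀, hσ₀, hρ0⟩ := hρ.2.1
    have hcomp : Λ.s μ₁ = Λ.r ρ := by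
      rw [hρ0, Λ.r_comp, Λ.r_comp]; exact hμc
    exact h (Λ.comp μ₁ ρ hcomp) ⟨ρ, hρ, hcomp, rfl⟩
  · intro h
    rw [Set.eq_empty_iff_forall_notMem] at h ⊢
    rintro lam ⟨ρ, hρ, -, -⟩
    exact h ρ hρ

end KGraph
end

section
/- Let Λ be an aperiodic finitely aligned k-graph, v ∈ Λ^0, and H a finite subset of Λv. Then there exists τ ∈ vΛ such that MCE(ατ, βτ) = ∅ for every pair of distinct α, β ∈ H. -/
namespace KGraph

variable {k : ℕ} (Λ : KGraph k)

lemma d_le_of_initSeg {μ lam : Λ.Mor} (h : Λ.InitSeg μ lam) : Λ.d μ ≤ Λ.d lam := by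
  obtain ⟨ρ, hρ, rfl⟩ := h
  rw [Λ.d_comp]; exact le_self_add

lemma initSeg_trans {μ ν lam : Λ.Mor} (h1 : Λ.InitSeg μ ν) (h2 : Λ.InitSeg ν lam) :
    Λ.InitSeg μ lam := by
  obtain ⟨ρ, hρ, rfl⟩ := h1
  obtain ⟨σ, hσ, rfl⟩ := h2
  refine ⟨Λ.comp ρ σ (by rw [Λ.s_comp] at hσ; exact hσ), by rw [Λ.r_comp]; exact hρ, ?_⟩
  exact Λ.assoc μ ρ σ hρ _

lemma initSeg_unique {μ ν lam : Λ.Mor} (hμ : Λ.InitSeg μ lam) (hν : Λ.InitSeg ν lam)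
    (hd : Λ.d μ = Λ.d ν) : μ = ν := by
  obtain ⟨ρ, h1, rfl⟩ := hμ
  obtain ⟨σ, h2, heq⟩ := hν
  have hdρσ : Λ.d ρ = Λ.d σ := by
    have h3 := congrArg Λ.d heq
    rw [Λ.d_comp, Λ.d_comp, hd] at h3
    exact add_left_cancel h3
  have hfac := Λ.factor (Λ.comp μ ρ h1) (Λ.d μ) (Λ.d ρ) (Λ.d_comp μ ρ h1)
  have e1 := hfac.unique (y₁ := ⟨(μ, ρ), h1⟩) (y₂ := ⟨(ν, σ), h2⟩)
    ⟨rfl, rfl, rfl⟩ ⟨hd.symm, hdρσ.symm, heq⟩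
  exact congrArg (fun p => p.val.1) e1

lemma exists_initSeg (lam : Λ.Mor) (n : Fin k → ℕ) (hn : n ≤ Λ.d lam) :
    ∃ μ, Λ.d μ = n ∧ Λ.InitSeg μ lam := by
  have h1 : Λ.d lam = n + (Λ.d lam - n) := by
    funext i
    have h2 : n i ≤ Λ.d lam i := hn i
    simp only [Pi.add_apply, Pi.sub_apply]
    omega
  obtain ⟨⟨⟨μ, ρ⟩, h⟩, hd1, hd2, heq⟩ := (Λ.factor lam n _ h1).exists
  exact ⟨μ, hd1, ρ, h, heq⟩

lemma initSeg_of_initSeg_le {μ lam' lam : Λ.Mor} (hμ : Λ.InitSeg μ lam)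
    (hlam' : Λ.InitSeg lam' lam) (hd : Λ.d μ ≤ Λ.d lam') : Λ.InitSeg μ lam' := by
  obtain ⟨ξ, h1, rfl⟩ := hμ
  have hd' : Λ.d lam' ≤ Λ.d (Λ.comp μ ξ h1) := Λ.d_le_of_initSeg hlam'
  have hξ : Λ.d ξ = (Λ.d lam' - Λ.d μ) + (Λ.d (Λ.comp μ ξ h1) - Λ.d lam') := by
    funext i
    have h2 := hd i; have h3 := hd' i
    have h4 : Λ.d (Λ.comp μ ξ h1) i = Λ.d μ i + Λ.d ξ i := by rw [Λ.d_comp]; rfl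
    simp only [Pi.add_apply, Pi.sub_apply] at *
    omega
  obtain ⟨⟨⟨ξ₁, ξ₂⟩, h⟩, hd1, hd2, heq⟩ := (Λ.factor ξ _ _ hξ).exists
  have h5 : Λ.s μ = Λ.r ξ₁ := by rw [h1, heq, Λ.r_comp]
  have h6 : Λ.InitSeg (Λ.comp μ ξ₁ h5) (Λ.comp μ ξ h1) := by
    refine ⟨ξ₂, by rw [Λ.s_comp]; exact h, ?_⟩
    subst heq
    exact (Λ.assoc μ ξ₁ ξ₂ h5 h).symm
  have h7 : Λ.comp μ ξ₁ h5 = lam' := by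
    refine Λ.initSeg_unique h6 hlam' ?_
    rw [Λ.d_comp, hd1]
    funext i
    have h8 : Λ.d μ i ≤ Λ.d lam' i := hd i
    simp only [Pi.add_apply, Pi.sub_apply]
    omega
  exact ⟨ξ₁, h5, h7.symm⟩

lemma mce_comp_empty {μ ν : Λ.Mor} (hmce : Λ.MCE μ ν = ∅) (ρ : Λ.Mor)
    (h1 : Λ.s μ = Λ.r ρ) (h2 : Λ.s ν = Λ.r ρ) :
    Λ.MCE (Λ.comp μ ρ h1) (Λ.comp ν ρ h2) = ∅ := by
  rw [Set.eq_empty_iff_forall_notMem]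
  rintro lam ⟨hdlam, hμl, hνl⟩
  have hn : Λ.d μ ⊔ Λ.d ν ≤ Λ.d lam := by
    intro i
    rw [hdlam]
    simp only [Pi.sup_apply, Λ.d_comp, Pi.add_apply]
    omega
  obtain ⟨lam', hdl', hl'⟩ := Λ.exists_initSeg lam _ hn
  have hμ' : Λ.InitSeg μ lam' :=
    Λ.initSeg_of_initSeg_le (Λ.initSeg_trans ⟨ρ, h1, rfl⟩ hμl) hl'
      (hdl' ▸ le_sup_left)
  have hν' : Λ.InitSeg ν lam' :=
    Λ.initSeg_of_initSeg_le (Λ.initSeg_trans ⟨ρ, h2, rfl⟩ hνl) hl'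
      (hdl' ▸ le_sup_right)
  have : lam' ∈ Λ.MCE μ ν := ⟨hdl', hμ', hν'⟩
  rw [hmce] at this
  exact this

lemma comp_left_injective {α β τ : Λ.Mor} (h1 : Λ.s α = Λ.r τ) (h2 : Λ.s β = Λ.r τ)
    (heq : Λ.comp α τ h1 = Λ.comp β τ h2) : α = β := by
  have hd : Λ.d α = Λ.d β := by
    have h3 := congrArg Λ.d heq
    rw [Λ.d_comp, Λ.d_comp] at h3
    exact add_right_cancel h3
  exact Λ.initSeg_unique ⟨τ, h1, rfl⟩ ⟨τ, h2, heq⟩ hd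

/-- In an aperiodic finitely aligned `k`-graph, for any vertex `v` and
finite `H ⊆ Λv` there is `τ ∈ vΛ` with `MCE(ατ, βτ) = ∅` for all
distinct `α, β ∈ H`. -/
theorem aperiodic_simultaneous_separation
    (hFA : Λ.FinitelyAligned) (hAp : Λ.Aperiodic)
    (v : Λ.Obj) (H : Set Λ.Mor) (hfin : H.Finite) (hH : ∀ α ∈ H, Λ.s α = v) :
    ∃ τ : Λ.Mor, Λ.r τ = v ∧
      ∀ α ∈ H, ∀ β ∈ H, α ≠ β →
        ∀ (hα : Λ.s α = Λ.r τ) (hβ : Λ.s β = Λ.r τ),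
          Λ.MCE (Λ.comp α τ hα) (Λ.comp β τ hβ) = ∅ := by
  have main : ∀ S : Set (Λ.Mor × Λ.Mor), S.Finite →
      (∀ p ∈ S, Λ.s p.1 = v ∧ Λ.s p.2 = v ∧ p.1 ≠ p.2) →
      ∃ τ : Λ.Mor, Λ.r τ = v ∧ ∀ p ∈ S, ∀ (h1 : Λ.s p.1 = Λ.r τ) (h2 : Λ.s p.2 = Λ.r τ),
        Λ.MCE (Λ.comp p.1 τ h1) (Λ.comp p.2 τ h2) = ∅ := by
    intro S hS
    induction S, hS using Set.Finite.induction_on with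
    | empty =>
      exact fun _ => ⟨Λ.id v, Λ.r_id v, fun p hp => (Set.notMem_empty p hp).elim⟩
    | @insert p S hpS hSfin IH =>
      intro hyp
      obtain ⟨τ', hrτ', hτ'⟩ := IH (fun q hq => hyp q (Set.mem_insert_of_mem p hq))
      obtain ⟨hs1, hs2, hne⟩ := hyp p (Set.mem_insert p S)
      have hα' : Λ.s p.1 = Λ.r τ' := hs1.trans hrτ'.symm
      have hβ' : Λ.s p.2 = Λ.r τ' := hs2.trans hrτ'.symm
      set A := Λ.comp p.1 τ' hα' with hA_def
      set B := Λ.comp p.2 τ' hβ' with hB_def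
      have hAB : A ≠ B := fun h => hne (Λ.comp_left_injective hα' hβ' h)
      have hsAB : Λ.s A = Λ.s B := by rw [hA_def, hB_def, Λ.s_comp, Λ.s_comp]
      obtain ⟨σ, hAσ, hBσ, hmce⟩ := hAp A B hAB hsAB
      have hττ : Λ.s τ' = Λ.r σ := by rw [← Λ.s_comp p.1 τ' hα']; exact hAσ
      refine ⟨Λ.comp τ' σ hττ, by rw [Λ.r_comp]; exact hrτ', ?_⟩
      intro q hq h1 h2
      rcases Set.mem_insert_iff.mp hq with hq'| hq'
      · subst hq'
        have e1 : Λ.comp q.1 (Λ.comp τ' σ hττ) h1 = Λ.comp A σ hAσ :=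
          (Λ.assoc q.1 τ' σ hα' hττ).symm
        have e2 : Λ.comp q.2 (Λ.comp τ' σ hττ) h2 = Λ.comp B σ hBσ :=
          (Λ.assoc q.2 τ' σ hβ' hττ).symm
        rw [e1, e2]
        exact hmce
      · obtain ⟨ht1, ht2, _⟩ := hyp q (Set.mem_insert_of_mem p hq')
        have hq1 : Λ.s q.1 = Λ.r τ' := ht1.trans hrτ'.symm
        have hq2 : Λ.s q.2 = Λ.r τ' := ht2.trans hrτ'.symm
        have e1 : Λ.comp q.1 (Λ.comp τ' σ hττ) h1
            = Λ.comp (Λ.comp q.1 τ' hq1) σ ((Λ.s_comp q.1 τ' hq1).trans hττ) :=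
          (Λ.assoc q.1 τ' σ hq1 hττ).symm
        have e2 : Λ.comp q.2 (Λ.comp τ' σ hττ) h2
            = Λ.comp (Λ.comp q.2 τ' hq2) σ ((Λ.s_comp q.2 τ' hq2).trans hττ) :=
          (Λ.assoc q.2 τ' σ hq2 hττ).symm
        rw [e1, e2]
        exact Λ.mce_comp_empty (hτ' q hq' hq1 hq2) σ _ _
  obtain ⟨τ, hrτ, hτ⟩ := main {p ∈ H ×ˢ H | p.1 ≠ p.2}
    ((hfin.prod hfin).subset (fun p hp => hp.1))
    (fun p hp => ⟨hH p.1 hp.1.1, hH p.2 hp.1.2, hp.2⟩)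
  exact ⟨τ, hrτ, fun α hα β hβ hne h1 h2 =>
    hτ (α, β) ⟨⟨hα, hβ⟩, hne⟩ h1 h2⟩

end KGraph
end

section
/- Let Λ be a finitely aligned k-graph, x ∈ ∂Λ, and λ ∈ Λ with s(λ) = r(x). Then λx ∈ ∂Λ. -/
namespace KGraph

variable {k : ℕ} (Λ : KGraph k)

section Aux

variable {k : ℕ} {Λ : KGraph k}

lemma comp_congr_s12 {μ ν ν' : Λ.Mor} (h : ν = ν') (hc : Λ.s μ = Λ.r ν) (hc' : Λ.s μ = Λ.r ν') :
    Λ.comp μ ν hc = Λ.comp μ ν' hc' := by subst h; rfl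

lemma comp_left_cancel {μ ξ ξ' : Λ.Mor} {h : Λ.s μ = Λ.r ξ} {h' : Λ.s μ = Λ.r ξ'}
    (hc : Λ.comp μ ξ h = Λ.comp μ ξ' h') : ξ = ξ' := by
  have hd : Λ.d ξ' = Λ.d ξ := by
    have h2 := congrArg Λ.d hc
    rw [Λ.d_comp, Λ.d_comp] at h2
    exact (add_left_cancel h2).symm
  have hf := Λ.factor (Λ.comp μ ξ h) (Λ.d μ) (Λ.d ξ) (Λ.d_comp μ ξ h)
  have h1 := hf.unique (y₁ := ⟨(μ, ξ), h⟩) (y₂ := ⟨(μ, ξ'), h'⟩) ⟨rfl, rfl, rfl⟩ ⟨rfl, hd, hc⟩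
  exact congrArg (fun p => p.val.2) h1

lemma initSeg_comp (μ ρ : Λ.Mor) (h : Λ.s μ = Λ.r ρ) : Λ.InitSeg μ (Λ.comp μ ρ h) :=
  ⟨ρ, h, rfl⟩

lemma initSeg_d_le {α β : Λ.Mor} (h : Λ.InitSeg α β) : Λ.d α ≤ Λ.d β := by
  obtain ⟨ρ, hρ, rfl⟩ := h
  rw [Λ.d_comp]
  exact le_self_add

lemma initSeg_trans_s12 {α β γ : Λ.Mor} (h1 : Λ.InitSeg α β) (h2 : Λ.InitSeg β γ) :
    Λ.InitSeg α γ := by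
  obtain ⟨ρ, hρ, rfl⟩ := h1
  obtain ⟨σ, hσ, rfl⟩ := h2
  have h₂ : Λ.s ρ = Λ.r σ := (Λ.s_comp α ρ hρ).symm.trans hσ
  refine ⟨Λ.comp ρ σ h₂, hρ.trans (Λ.r_comp ρ σ h₂).symm, ?_⟩
  rw [← Λ.assoc]

lemma initSeg_comp_left {β γ : Λ.Mor} (h : Λ.InitSeg β γ) (a : Λ.Mor)
    (hb : Λ.s a = Λ.r β) (hg : Λ.s a = Λ.r γ) :
    Λ.InitSeg (Λ.comp a β hb) (Λ.comp a γ hg) := by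
  obtain ⟨ρ, hρ, rfl⟩ := h
  refine ⟨ρ, (Λ.s_comp a β hb).trans hρ, ?_⟩
  rw [Λ.assoc]

lemma initSeg_unique_s12 {β β' w : Λ.Mor} (h1 : Λ.InitSeg β w) (h2 : Λ.InitSeg β' w)
    (hd : Λ.d β = Λ.d β') : β = β' := by
  obtain ⟨ρ, hρ, rfl⟩ := h1
  obtain ⟨ρ', hρ', hw⟩ := h2
  have hdρ : Λ.d ρ' = Λ.d ρ := by
    have h2 := congrArg Λ.d hw
    rw [Λ.d_comp, Λ.d_comp, hd] at h2
    exact (add_left_cancel h2).symm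
  have hf := Λ.factor (Λ.comp β ρ hρ) (Λ.d β) (Λ.d ρ) (Λ.d_comp β ρ hρ)
  have h1 := hf.unique (y₁ := ⟨(β, ρ), hρ⟩) (y₂ := ⟨(β', ρ'), hρ'⟩)
    ⟨rfl, rfl, rfl⟩ ⟨hd.symm, hdρ, hw⟩
  exact congrArg (fun p => p.val.1) h1

lemma exists_initSeg_s12 (w : Λ.Mor) (m : Fin k → ℕ) (hm : m ≤ Λ.d w) :
    ∃ w₁, Λ.InitSeg w₁ w ∧ Λ.d w₁ = m := by
  have hdw : Λ.d w = m + (Λ.d w - m) := by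
    funext i
    have h : m i ≤ Λ.d w i := hm i
    simp only [Pi.add_apply, Pi.sub_apply]
    omega
  obtain ⟨⟨⟨w₁, w₂⟩, hc⟩, ⟨h1, h2, h3⟩, -⟩ := Λ.factor w m (Λ.d w - m) hdw
  exact ⟨w₁, ⟨w₂, hc, h3⟩, h1⟩

lemma initSeg_of_initSeg {α ν w : Λ.Mor} (hα : Λ.InitSeg α w) (hν : Λ.InitSeg ν w)
    (hd : Λ.d α ≤ Λ.d ν) : Λ.InitSeg α ν := by
  obtain ⟨κ, hκ, rfl⟩ := hα
  have hdν : Λ.d ν ≤ Λ.d α + Λ.d κ := by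
    rw [← Λ.d_comp α κ hκ]
    exact initSeg_d_le hν
  have hdκ : Λ.d ν - Λ.d α ≤ Λ.d κ := by
    intro i
    have h1 : Λ.d ν i ≤ (Λ.d α + Λ.d κ) i := hdν i
    have h2 : Λ.d α i ≤ Λ.d ν i := hd i
    simp only [Pi.sub_apply, Pi.add_apply] at *
    omega
  obtain ⟨κ₁, ⟨κ₂, hc, hκeq⟩, hdκ₁⟩ := exists_initSeg_s12 κ (Λ.d ν - Λ.d α) hdκ
  have hακ₁ : Λ.s α = Λ.r κ₁ := hκ.trans (by rw [hκeq, Λ.r_comp])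
  have hW : Λ.comp α κ hκ = Λ.comp (Λ.comp α κ₁ hακ₁) κ₂ ((Λ.s_comp α κ₁ hακ₁).trans hc) := by
    have h1 : Λ.comp α κ hκ
        = Λ.comp α (Λ.comp κ₁ κ₂ hc) (hακ₁.trans (Λ.r_comp κ₁ κ₂ hc).symm) :=
      comp_congr_s12 hκeq hκ _
    rw [h1, ← Λ.assoc]
  have hdeq : Λ.d (Λ.comp α κ₁ hακ₁) = Λ.d ν := by
    rw [Λ.d_comp, hdκ₁]
    funext i
    have h2 : Λ.d α i ≤ Λ.d ν i := hd i
    simp only [Pi.add_apply, Pi.sub_apply]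
    omega
  have hinit : Λ.InitSeg (Λ.comp α κ₁ hακ₁) (Λ.comp α κ hκ) := hW ▸ initSeg_comp _ _ _
  have := initSeg_unique_s12 hν hinit hdeq.symm
  rw [this]
  exact initSeg_comp α κ₁ hακ₁

lemma mce_nonempty_of_common {ρ σ w : Λ.Mor} (hρ : Λ.InitSeg ρ w) (hσ : Λ.InitSeg σ w) :
    (Λ.MCE ρ σ).Nonempty := by
  have hle : Λ.d ρ ⊔ Λ.d σ ≤ Λ.d w := sup_le (initSeg_d_le hρ) (initSeg_d_le hσ)
  obtain ⟨w₁, hIw₁, hd₁⟩ := exists_initSeg_s12 w (Λ.d ρ ⊔ Λ.d σ) hle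
  refine ⟨w₁, hd₁, initSeg_of_initSeg hρ hIw₁ ?_, initSeg_of_initSeg hσ hIw₁ ?_⟩
  · rw [hd₁]; exact le_sup_left
  · rw [hd₁]; exact le_sup_right

/-- `Ext(μ, E)`: the set of complements `ξ` such that `μξ ∈ MCE(μ, α)` for some `α ∈ E`. -/
def ext (μ : Λ.Mor) (E : Set Λ.Mor) : Set Λ.Mor :=
  {ξ | ∃ h : Λ.s μ = Λ.r ξ, ∃ α ∈ E, Λ.comp μ ξ h ∈ Λ.MCE μ α}

lemma ext_finite (hFA : Λ.FinitelyAligned) {μ : Λ.Mor} {E : Set Λ.Mor} (hE : E.Finite) :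
    (ext μ E).Finite := by
  classical
  have hS : (⋃ α ∈ E, Λ.MCE μ α).Finite := hE.biUnion fun α _ => hFA μ α
  set f : Λ.Mor → Λ.Mor := fun ν =>
    if h : ∃ ξ, ∃ hc : Λ.s μ = Λ.r ξ, ν = Λ.comp μ ξ hc then h.choose else ν with hf
  apply Set.Finite.subset (hS.image f)
  rintro ξ ⟨h, α, hα, hν⟩
  refine ⟨Λ.comp μ ξ h, Set.mem_biUnion hα hν, ?_⟩
  have hex : ∃ ξ', ∃ hc : Λ.s μ = Λ.r ξ', Λ.comp μ ξ h = Λ.comp μ ξ' hc := ⟨ξ, h, rfl⟩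
  simp only [hf, dif_pos hex]
  obtain ⟨hc, heq⟩ := hex.choose_spec
  exact (comp_left_cancel heq).symm

lemma ext_isFE (hFA : Λ.FinitelyAligned) {v : Λ.Obj} {μ : Λ.Mor} {E : Set Λ.Mor}
    (hE : Λ.IsFE v E) (hrμ : Λ.r μ = v) : Λ.IsFE (Λ.s μ) (ext μ E) := by
  refine ⟨ext_finite hFA hE.1, fun ξ hξ => hξ.choose.symm, fun ρ hρ => ?_⟩
  -- ρ : path with r ρ = s μ; consider μρ
  have hμρ : Λ.s μ = Λ.r ρ := hρ.symm
  have hr : Λ.r (Λ.comp μ ρ hμρ) = v := by rw [Λ.r_comp]; exact hrμ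
  obtain ⟨α, hαE, τ, hτ⟩ := hE.2.2 (Λ.comp μ ρ hμρ) hr
  obtain ⟨hdτ, hμρτ, hατ⟩ := hτ
  have hμτ : Λ.InitSeg μ τ := initSeg_trans_s12 (initSeg_comp μ ρ hμρ) hμρτ
  obtain ⟨θ, hθ, hτeq⟩ := hμτ
  -- θ = ρ ⬝ τ₂ for the complement τ₂ of μρ in τ
  have hρθ : Λ.InitSeg ρ θ := by
    obtain ⟨τ₂, hτ₂, hτeq2⟩ := hμρτ
    have h₂ : Λ.s ρ = Λ.r τ₂ := (Λ.s_comp μ ρ hμρ).symm.trans hτ₂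
    have : Λ.comp μ θ hθ = Λ.comp μ (Λ.comp ρ τ₂ h₂) (hμρ.trans (Λ.r_comp ρ τ₂ h₂).symm) := by
      rw [← hτeq, hτeq2, Λ.assoc]
    exact (comp_left_cancel this) ▸ initSeg_comp ρ τ₂ h₂
  -- degree bookkeeping
  have hdθ : Λ.d μ ⊔ Λ.d α - Λ.d μ ≤ Λ.d θ := by
    intro i
    have h1 : Λ.d τ = Λ.d μ + Λ.d θ := by rw [hτeq, Λ.d_comp]
    have h2 := congrArg (fun g => g i) (h1.symm.trans hdτ)
    simp only [Pi.add_apply, Pi.sup_apply, Λ.d_comp] at h2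
    simp only [Pi.sub_apply, Pi.sup_apply]
    omega
  obtain ⟨σ₁, hσ₁θ, hdσ₁⟩ := exists_initSeg_s12 θ (Λ.d μ ⊔ Λ.d α - Λ.d μ) hdθ
  have hμσ₁ : Λ.s μ = Λ.r σ₁ := by
    obtain ⟨σ₂, hc, hθeq⟩ := hσ₁θ
    exact hθ.trans (by rw [hθeq, Λ.r_comp])
  -- ν = μσ₁ ∈ MCE(μ, α)
  have hνd : Λ.d (Λ.comp μ σ₁ hμσ₁) = Λ.d μ ⊔ Λ.d α := by
    rw [Λ.d_comp, hdσ₁]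
    funext i
    simp only [Pi.add_apply, Pi.sub_apply, Pi.sup_apply]
    omega
  have hντ : Λ.InitSeg (Λ.comp μ σ₁ hμσ₁) τ := by
    rw [hτeq]
    exact initSeg_comp_left hσ₁θ μ hμσ₁ hθ
  have hαν : Λ.InitSeg α (Λ.comp μ σ₁ hμσ₁) := by
    refine initSeg_of_initSeg hατ hντ ?_
    rw [hνd]
    exact le_sup_right
  have hσ₁ext : σ₁ ∈ ext μ E :=
    ⟨hμσ₁, α, hαE, hνd, initSeg_comp μ σ₁ hμσ₁, hαν⟩
  exact ⟨σ₁, hσ₁ext, mce_nonempty_of_common hρθ hσ₁θ⟩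

lemma InfPath.seg_congr {x : Λ.InfPath} {p q p' q' : Fin k → ℕ} (hp : p = p') (hq : q = q')
    {h1 : p ≤ q} {h2 : ∀ i, (q i : ℕ∞) ≤ x.deg i}
    {h1' : p' ≤ q'} {h2' : ∀ i, (q' i : ℕ∞) ≤ x.deg i} :
    x.seg p q h1 h2 = x.seg p' q' h1' h2' := by
  subst hp; subst hq; rfl

lemma InfPath.s_seg {x : Λ.InfPath} (p q : Fin k → ℕ) (hpq : p ≤ q)
    (hq : ∀ i, (q i : ℕ∞) ≤ x.deg i) :
    Λ.s (x.seg p q hpq hq) = x.vert q hq := by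
  obtain ⟨h, -⟩ := x.comp_seg p q q hpq le_rfl hq hq
  exact h

lemma InfPath.r_seg {x : Λ.InfPath} (p q : Fin k → ℕ) (hpq : p ≤ q)
    (hq : ∀ i, (q i : ℕ∞) ≤ x.deg i)
    (hp : ∀ i, (p i : ℕ∞) ≤ x.deg i) :
    Λ.r (x.seg p q hpq hq) = x.vert p hp := by
  obtain ⟨h, hc⟩ := x.comp_seg p p q le_rfl hpq hp hq
  have h2 : x.seg p q (le_rfl.trans hpq) hq = x.seg p q hpq hq := rfl
  rw [← h2, ← hc, Λ.r_comp]
  rfl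

lemma enat_sub_le {a b : ℕ} {D : ℕ∞} (hb : (b : ℕ∞) ≤ D) :
    ((b - a : ℕ) : ℕ∞) ≤ D - a := by
  cases D with
  | top => exact le_top.trans_eq (ENat.top_sub_coe a).symm
  | coe dN =>
    rw [← ENat.coe_sub]
    have : b ≤ dN := by exact_mod_cast hb
    exact_mod_cast Nat.sub_le_sub_right this a

end Aux

/-- If `x ∈ ∂Λ` and `s(λ) = r(x)`, then `λx ∈ ∂Λ`: any path `y` with
`y(0, d λ) = λ` and `σ^{d λ}(y) = x` is a boundary path. -/
theorem extend_boundary (hFA : Λ.FinitelyAligned)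
    (x : Λ.InfPath) (hx : Λ.IsBoundary x) (lam : Λ.Mor)
    (hsr : Λ.s lam = x.rng)
    (y : Λ.InfPath) (hy : y.ExtendsBy x lam) :
    Λ.IsBoundary y := by
  obtain ⟨hdy, hseg0, hshift⟩ := hy
  subst hshift
  intro n hn E hE
  set a : Fin k → ℕ := Λ.d lam with ha
  set q : Fin k → ℕ := n ⊔ a with hqdef
  have hnq : n ≤ q := le_sup_left
  have haq : a ≤ q := le_sup_right
  have hq : ∀ i, (q i : ℕ∞) ≤ y.deg i := by
    intro i
    have hqi : q i = max (n i) (a i) := rfl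
    rcases max_cases (n i) (a i) with ⟨hmax, -⟩ | ⟨hmax, -⟩
    · rw [hqi, hmax]; exact hn i
    · rw [hqi, hmax]; exact hdy i
  set μ : Λ.Mor := y.seg n q hnq hq with hμ
  have hsμ : Λ.s μ = y.vert q hq := InfPath.s_seg n q hnq hq
  have hrμ : Λ.r μ = y.vert n hn := InfPath.r_seg n q hnq hq hn
  set m : Fin k → ℕ := q - a with hmdef
  have ham : a + m = q := by
    funext i
    have h1 : a i ≤ q i := haq i
    simp only [Pi.add_apply, hmdef, Pi.sub_apply]
    omega
  have hm' : ∀ i, (m i : ℕ∞) ≤ (y.shift a hdy).deg i := by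
    intro i
    show (m i : ℕ∞) ≤ y.deg i - a i
    have : m i = q i - a i := rfl
    rw [this]
    exact enat_sub_le (hq i)
  have hvert : (y.shift a hdy).vert m hm' = Λ.s μ := by
    rw [hsμ]
    show Λ.r (y.seg (a + m) (a + m) _ _) = Λ.r (y.seg q q le_rfl hq)
    exact congrArg Λ.r (InfPath.seg_congr ham ham)
  have hFE : Λ.IsFE ((y.shift a hdy).vert m hm') (ext μ E) := by
    rw [hvert]
    exact ext_isFE hFA hE hrμ
  obtain ⟨p, hp, hmem⟩ := hx m hm' (ext μ E) hFE
  obtain ⟨hc, α, hαE, hν⟩ := hmem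
  -- identify the shifted segment with a segment of `y`
  have hamp : a + (m + p) = q + p := by
    funext i
    have h1 := congrArg (fun g => g i) ham
    simp only [Pi.add_apply] at *
    omega
  have hq' : ∀ i, ((q + p) i : ℕ∞) ≤ y.deg i := by
    intro i
    have h1 := enat_aux (hdy i) (hp i)
    have h2 : a i + (m + p) i = (q + p) i := congrArg (fun g => g i) hamp
    rw [← h2]
    exact h1
  have hξ : (y.shift a hdy).seg m (m + p) le_self_add hp
      = y.seg q (q + p) le_self_add hq' := InfPath.seg_congr ham hamp
  -- the common extension ν = μ ⬝ ξ equals y(n, q+p)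
  obtain ⟨hc2, hcc⟩ := y.comp_seg n q (q + p) hnq le_self_add hq hq'
  have hνW : Λ.comp μ ((y.shift a hdy).seg m (m + p) le_self_add hp) hc
      = y.seg n (q + p) (hnq.trans le_self_add) hq' := by
    have h1 := comp_congr_s12 (μ := μ) hξ hc (hξ ▸ hc)
    rw [h1]
    exact hcc
  set W : Λ.Mor := y.seg n (q + p) (hnq.trans le_self_add) hq' with hW
  have hαW : Λ.InitSeg α W := hνW ▸ hν.2.2
  have hdα : Λ.d α ≤ (q + p) - n := by
    have h1 : Λ.d α ≤ Λ.d W := initSeg_d_le hαW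
    rw [hW, y.d_seg] at h1
    exact h1
  have hndα : n + Λ.d α ≤ q + p := by
    intro i
    have h1 := hdα i
    have h2 : n i ≤ (q + p) i := (hnq i).trans (le_self_add)
    simp only [Pi.add_apply, Pi.sub_apply] at *
    omega
  have hpE : ∀ i, ((n + Λ.d α) i : ℕ∞) ≤ y.deg i := fun i =>
    le_trans (by exact_mod_cast hndα i) (hq' i)
  refine ⟨Λ.d α, hpE, ?_⟩
  -- y(n, n + d α) = α
  obtain ⟨hc3, hcc3⟩ := y.comp_seg n (n + Λ.d α) (q + p) le_self_add hndα hpE hq'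
  have hseg_init : Λ.InitSeg (y.seg n (n + Λ.d α) le_self_add hpE) W :=
    ⟨y.seg (n + Λ.d α) (q + p) hndα hq', hc3, hcc3.symm⟩
  have hdeq : Λ.d (y.seg n (n + Λ.d α) le_self_add hpE) = Λ.d α := by
    rw [y.d_seg]
    funext i
    simp only [Pi.sub_apply, Pi.add_apply]
    omega
  rw [initSeg_unique_s12 hseg_init hαW hdeq]
  exact hαE

end KGraph
end
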